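/- For the optimal tilting function η*(x) = (Σ_{s,z} γ_s² θ_z² / δ_{sz}(x))⁻¹, the effective sample size of the resulting pseudo-population equals N · E_+[η*(X)], where the expectation is over X ~ f_+. -/

import Mathlib

open MeasureTheory

/-- For the optimal tilting function η*, the effective sample size of the
resulting pseudo-population equals N · E₊[η*(X)]. -/
theorem flexor_ESS_eq_N_mul_expectation
    {Ω : Type*} [MeasurableSpace Ω] (μ : Measure Ω) [IsProbabilityMeasure μ]
    {J K : ℕ} (δ : Fin J × Fin K → Ω → ℝ) (γ : Fin J → ℝ) (θ : Fin K → ℝ)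
    (hδpos : ∀ sz x, 0 < δ sz x)
    (hδsum : ∀ x, ∑ sz : Fin J × Fin K, δ sz x = 1)
    (hγpos : ∀ s, 0 < γ s) (hθpos : ∀ z, 0 < θ z)
    (N : ℝ)
    (ηstar : Ω → ℝ)
    (hηstar : ∀ x, ηstar x = (∑ sz : Fin J × Fin K, (γ sz.1) ^ 2 * (θ sz.2) ^ 2 / δ sz x)⁻¹)
    (hηstarInt : Integrable ηstar μ)
    -- the balancing weights of the pseudo-population generated by η*
    (ρ : Fin J × Fin K → Ω → ℝ)
    (hρ : ∀ sz x, ρ sz x = γ sz.1 * θ sz.2 * ηstar x / (δ sz x * ∫ y, ηstar y ∂μ))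
    (hfin : Integrable (fun x => ∑ sz : Fin J × Fin K, (ρ sz x) ^ 2 * δ sz x) μ) :
    N / ∫ x, ∑ sz : Fin J × Fin K, (ρ sz x) ^ 2 * δ sz x ∂μ
      = N * ∫ x, ηstar x ∂μ := by
  -- Ω is nonempty since μ is a probability measure
  have hΩ : Nonempty Ω := by
    by_contra h
    have : μ Set.univ = 0 := by
      rw [Set.univ_eq_empty_iff.2 (not_nonempty_iff.1 h)]; simp
    simp [measure_univ] at this
  obtain ⟨x₀⟩ := hΩ
  -- the index type is nonempty
  have hJK : Nonempty (Fin J × Fin K) := by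
    by_contra h
    have h2 := hδsum x₀
    have := not_nonempty_iff.1 h
    rw [Finset.univ_eq_empty, Finset.sum_empty] at h2
    norm_num at h2
  -- ηstar is positive everywhere
  have hηpos : ∀ x, 0 < ηstar x := by
    intro x
    rw [hηstar x]
    apply inv_pos.2
    apply Finset.sum_pos
    · intro sz _
      exact div_pos (mul_pos (pow_pos (hγpos _) 2) (pow_pos (hθpos _) 2)) (hδpos sz x)
    · exact Finset.univ_nonempty
  set c : ℝ := ∫ y, ηstar y ∂μ with hc
  have hcpos : 0 < c := by
    have : 0 < μ (Function.support ηstar) := by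
      have : Function.support ηstar = Set.univ := by
        ext x; simp [Function.support, (hηpos x).ne']
      rw [this, measure_univ]; norm_num
    exact (integral_pos_iff_support_of_nonneg (fun x => (hηpos x).le) hηstarInt).2 this
  -- pointwise: the sum equals ηstar x / c²
  have hpt : ∀ x, ∑ sz : Fin J × Fin K, (ρ sz x) ^ 2 * δ sz x = ηstar x / c ^ 2 := by
    intro x
    have hsum : ∑ sz : Fin J × Fin K, (γ sz.1) ^ 2 * (θ sz.2) ^ 2 / δ sz x = (ηstar x)⁻¹ := by
      rw [hηstar x, inv_inv]
    calc ∑ sz : Fin J × Fin K, (ρ sz x) ^ 2 * δ sz x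
        = ∑ sz : Fin J × Fin K, ((γ sz.1) ^ 2 * (θ sz.2) ^ 2 / δ sz x) * (ηstar x ^ 2 / c ^ 2) := by
          apply Finset.sum_congr rfl
          intro sz _
          rw [hρ sz x]
          field_simp [(hδpos sz x).ne', hcpos.ne']
      _ = (ηstar x)⁻¹ * (ηstar x ^ 2 / c ^ 2) := by rw [← Finset.sum_mul, hsum]
      _ = ηstar x / c ^ 2 := by
          field_simp [(hηpos x).ne']
  have hint : ∫ x, ∑ sz : Fin J × Fin K, (ρ sz x) ^ 2 * δ sz x ∂μ = c⁻¹ := by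
    calc ∫ x, ∑ sz : Fin J × Fin K, (ρ sz x) ^ 2 * δ sz x ∂μ
        = ∫ x, ηstar x / c ^ 2 ∂μ := by
          apply integral_congr_ae
          filter_upwards with x using hpt x
      _ = c / c ^ 2 := by
          rw [integral_div, ← hc]
      _ = c⁻¹ := by field_simp [hcpos.ne']
  rw [hint, div_inv_eq_mul]
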